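/- (Constant Moments Ratio property.) Let p be a probability mass function on the nonnegative integers that follows GHD(a, b, θ) with positive parameters a = (a_1, …, a_P), b = (b_1, …, b_Q) and θ > 0, and let m := ∑_{k≥0} k · p(k) denote its mean. Then for every positive integer r, ∑_{k≥0} (k)_r · p(k) = m^r · ∏_{i=1}^P (⟨a_i⟩^r / a_i^r) · ∏_{l=1}^Q (b_l^r / ⟨b_l⟩^r). In particular the r-th factorial moment equals f^{(r)}(m) where f^{(r)}(x) = x^r ∏_{i=1}^P (⟨a_i⟩^r / a_i^r) ∏_{l=1}^Q (b_l^r / ⟨b_l⟩^r). -/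

import Mathlib

open Filter Topology



/-- The rising factorial `⟨a⟩^j = a (a+1) ⋯ (a+j-1)`. -/
noncomputable def risingFact (a : ℝ) (j : ℕ) : ℝ := ∏ i ∈ Finset.range j, (a + i)

/-- The `j`-th term of the generalized hypergeometric series
`(∏ᵢ ⟨aᵢ⟩^j / ∏ₗ ⟨bₗ⟩^j) · (θ(s-1))^j / j!`. -/
noncomputable def ghdSeries {P Q : ℕ} (a : Fin P → ℝ) (b : Fin Q → ℝ) (θ s : ℝ) (j : ℕ) : ℝ :=
  ((∏ i, risingFact (a i) j) / (∏ l, risingFact (b l) j)) * (θ * (s - 1)) ^ j / (j.factorial : ℝ)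

/-- A probability mass function `p` on `ℕ` follows the generalized hypergeometric
distribution `GHD(a, b, θ)` if there is some `ρ > 1` such that for every `s` with `|s| < ρ`,
both the probability generating series and the generalized hypergeometric series converge and
`∑ₖ p(k) sᵏ = ∑ⱼ (∏ᵢ ⟨aᵢ⟩^j / ∏ₗ ⟨bₗ⟩^j) (θ(s-1))^j / j!`. -/
def IsGHD {P Q : ℕ} (a : Fin P → ℝ) (b : Fin Q → ℝ) (θ : ℝ) (p : ℕ → ℝ) : Prop :=
  (∀ k, 0 ≤ p k) ∧ Summable p ∧ (∑' k, p k) = 1 ∧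
    ∃ ρ : ℝ, 1 < ρ ∧ ∀ s : ℝ, |s| < ρ →
      Summable (fun k => p k * s ^ k) ∧
      Summable (fun j => ghdSeries a b θ s j) ∧
      (∑' k, p k * s ^ k) = ∑' j, ghdSeries a b θ s j

/-- **Constant Moments Ratio property.** If `p` follows `GHD(a, b, θ)` with
positive parameters and `m = ∑ₖ k p(k)` is its mean, then for every positive integer `r`,
`∑ₖ (k)ᵣ p(k) = m^r · ∏ᵢ (⟨aᵢ⟩^r / aᵢ^r) · ∏ₗ (bₗ^r / ⟨bₗ⟩^r)`; i.e. the `r`-th factorial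
moment equals `f⁽ʳ⁾(m)` for the CMR function `f⁽ʳ⁾(x) = x^r ∏ᵢ (⟨aᵢ⟩^r/aᵢ^r) ∏ₗ (bₗ^r/⟨bₗ⟩^r)`. -/
lemma risingFact_pos {x : ℝ} (hx : 0 < x) (j : ℕ) : 0 < risingFact x j :=
  Finset.prod_pos fun i _ => by positivity

lemma risingFact_one (x : ℝ) : risingFact x 1 = x := by
  simp [risingFact]


lemma coeff_zero (D : ℕ → ℝ) (c : ℝ) (hc : 0 < c)
    (hD : Summable fun n => |D n| * c ^ n)
    (h : ∀ u : ℝ, 0 < u → u < c → ∑' n, D n * u ^ n = 0) : ∀ n, D n = 0 := by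
  have helper : ∀ j : ℕ, Summable fun i => |D (i + j)| * c ^ i := by
    intro j
    have h1 : Summable fun i => |D (i + j)| * c ^ (i + j) := (summable_nat_add_iff j).2 hD
    have h2 := h1.mul_right ((c : ℝ) ^ j)⁻¹
    refine h2.congr fun i => ?_
    rw [pow_add]
    field_simp
  have helper2 : ∀ j : ℕ, ∀ u : ℝ, 0 ≤ u → u ≤ c →
      Summable fun i => D (i + j) * u ^ i := by
    intro j u hu huc
    refine summable_abs_iff.mp ?_
    refine (helper j).of_nonneg_of_le (fun i => abs_nonneg _) (fun i => ?_)
    rw [abs_mul, abs_pow, abs_of_nonneg hu]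
    exact mul_le_mul_of_nonneg_left (pow_le_pow_left₀ hu huc i) (abs_nonneg _)
  intro n
  induction n using Nat.strong_induction_on with
  | _ n IH =>
    have key : ∀ u : ℝ, 0 < u → u < c → ∑' i, D (i + n) * u ^ i = 0 := by
      intro u hu huc
      have hs : Summable fun k => D k * u ^ k := by
        simpa using helper2 0 u hu.le huc.le
      have hsplit := Summable.sum_add_tsum_nat_add (f := fun k => D k * u ^ k) n hs
      have hz : ∑ i ∈ Finset.range n, D i * u ^ i = 0 :=
        Finset.sum_eq_zero fun i hi => by rw [IH i (Finset.mem_range.mp hi)]; ring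
      rw [hz, zero_add, h u hu huc] at hsplit
      have h2 : u ^ n * (∑' i, D (i + n) * u ^ i) = 0 := by
        rw [← tsum_mul_left, ← hsplit]
        exact tsum_congr fun i => by
          show u ^ n * (D (i + n) * u ^ i) = D (i + n) * u ^ (i + n)
          rw [pow_add]; ring
      rcases mul_eq_zero.mp h2 with h' | h'
      · exact absurd h' (by positivity)
      · exact h'
    set M : ℝ := ∑' i, |D (i + (n + 1))| * c ^ i with hM
    have hle : ∀ u ∈ Set.Ioo (0 : ℝ) c, |D n| ≤ M * u := by
      intro u hu
      obtain ⟨hu0, huc⟩ := hu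
      have hsn : Summable fun i => D (i + n) * u ^ i := helper2 n u hu0.le huc.le
      have hz := Summable.tsum_eq_zero_add hsn
      rw [key u hu0 huc] at hz
      have hDn : D n = -∑' i, D (i + 1 + n) * u ^ (i + 1) := by
        simp only [zero_add, pow_zero, mul_one] at hz
        linarith [hz]
      have habs : ∀ i : ℕ, |D (i + 1 + n) * u ^ (i + 1)| ≤ (|D (i + (n + 1))| * c ^ i) * u := by
        intro i
        have hidx : i + 1 + n = i + (n + 1) := by omega
        rw [hidx, abs_mul, abs_pow, abs_of_nonneg hu0.le, pow_succ, ← mul_assoc]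
        refine mul_le_mul_of_nonneg_right ?_ hu0.le
        exact mul_le_mul_of_nonneg_left (pow_le_pow_left₀ hu0.le huc.le i) (abs_nonneg _)
      have hsum_abs : Summable fun i => |D (i + 1 + n) * u ^ (i + 1)| := by
        refine ((helper (n + 1)).mul_right u).of_nonneg_of_le (fun i => abs_nonneg _) habs
      calc |D n| = |∑' i, D (i + 1 + n) * u ^ (i + 1)| := by rw [hDn, abs_neg]
        _ ≤ ∑' i, |D (i + 1 + n) * u ^ (i + 1)| := by
            have := norm_tsum_le_tsum_norm (f := fun i => D (i + 1 + n) * u ^ (i + 1))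
                (by simpa only [Real.norm_eq_abs] using hsum_abs)
            simpa only [Real.norm_eq_abs] using this
        _ ≤ ∑' i, (|D (i + (n + 1))| * c ^ i) * u :=
            Summable.tsum_le_tsum habs hsum_abs ((helper (n + 1)).mul_right u)
        _ = M * u := by rw [tsum_mul_right]
    have htend : Tendsto (fun u : ℝ => M * u) (𝓝[>] (0 : ℝ)) (𝓝 0) := by
      have : Tendsto (fun u : ℝ => M * u) (𝓝 (0 : ℝ)) (𝓝 (M * 0)) :=
        (continuous_const.mul continuous_id).tendsto 0
      rw [mul_zero] at this
      exact this.mono_left nhdsWithin_le_nhds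
    have hev : ∀ᶠ u in 𝓝[>] (0 : ℝ), |D n| ≤ M * u := by
      filter_upwards [Ioo_mem_nhdsGT_of_mem ⟨le_refl (0 : ℝ), hc⟩] with u hu
      exact hle u hu
    have : |D n| ≤ 0 := ge_of_tendsto htend hev
    exact abs_nonpos_iff.mp this

theorem ghd_constant_moments_ratio {P Q : ℕ} (a : Fin P → ℝ) (b : Fin Q → ℝ) (θ : ℝ)
    (ha : ∀ i, 0 < a i) (hb : ∀ l, 0 < b l) (hθ : 0 < θ)
    (p : ℕ → ℝ) (hp : IsGHD a b θ p) (m : ℝ) (hm : m = ∑' k : ℕ, (k : ℝ) * p k)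
    (r : ℕ) (hr : 0 < r) :
    (∑' k, (k.descFactorial r : ℝ) * p k)
      = m ^ r * (∏ i, risingFact (a i) r / (a i) ^ r) * (∏ l, (b l) ^ r / risingFact (b l) r) := by
  obtain ⟨hp0, hpsum, hpt, ρ, hρ, hspec⟩ := hp
  set c : ℝ := (ρ - 1) / 2 with hcdef
  have hc : 0 < c := by simp only [hcdef]; linarith
  have habs1u : ∀ u : ℝ, 0 ≤ u → u ≤ c → |1 + u| < ρ := by
    intro u hu huc
    rw [abs_of_nonneg (by linarith)]
    simp only [hcdef] at huc; linarith
  -- the coefficient sequences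
  set A : ℕ → ℝ := fun n => ∑' k, (k.choose n : ℝ) * p k with hAdef
  set B : ℕ → ℝ := fun j =>
    ((∏ i, risingFact (a i) j) / (∏ l, risingFact (b l) j)) * θ ^ j / (j.factorial : ℝ)
    with hBdef
  have hBg : ∀ u : ℝ, ∀ j : ℕ, ghdSeries a b θ (1 + u) j = B j * u ^ j := by
    intro u j
    simp only [ghdSeries, hBdef, add_sub_cancel_left, mul_pow]
    ring
  -- summability in k for each n
  have hAk : ∀ n : ℕ, Summable fun k => (k.choose n : ℝ) * p k := by
    intro n
    have h1 : Summable fun k => (c ^ n)⁻¹ * (p k * (1 + c) ^ k) :=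
      ((hspec (1 + c) (habs1u c hc.le le_rfl)).1).mul_left _
    refine h1.of_nonneg_of_le (fun k => mul_nonneg (Nat.cast_nonneg _) (hp0 k)) (fun k => ?_)
    have hle : (k.choose n : ℝ) * c ^ n ≤ (1 + c) ^ k := by
      rcases le_or_gt n k with hnk | hnk
      · have hmem : n ∈ Finset.range (k + 1) := Finset.mem_range.mpr (by omega)
        have := Finset.single_le_sum
          (f := fun i => c ^ i * (1 : ℝ) ^ (k - i) * (k.choose i : ℝ))
          (fun i _ => by positivity) hmem
        calc (k.choose n : ℝ) * c ^ n = c ^ n * 1 ^ (k - n) * (k.choose n : ℝ) := by ring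
          _ ≤ ∑ i ∈ Finset.range (k + 1), c ^ i * 1 ^ (k - i) * (k.choose i : ℝ) := this
          _ = (c + 1) ^ k := (add_pow c 1 k).symm
          _ = (1 + c) ^ k := by ring
      · simp [Nat.choose_eq_zero_of_lt hnk]
        positivity
    have h2 : (k.choose n : ℝ) ≤ (c ^ n)⁻¹ * (1 + c) ^ k := by
      rw [inv_mul_eq_div, le_div_iff₀ (by positivity)]
      exact hle
    calc (k.choose n : ℝ) * p k ≤ ((c ^ n)⁻¹ * (1 + c) ^ k) * p k :=
          mul_le_mul_of_nonneg_right h2 (hp0 k)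
      _ = (c ^ n)⁻¹ * (p k * (1 + c) ^ k) := by ring
  -- the double sum, indexed (n, k)
  have hF : ∀ u : ℝ, 0 ≤ u → u ≤ c →
      Summable (fun q : ℕ × ℕ => (q.2.choose q.1 : ℝ) * p q.2 * u ^ q.1) := by
    intro u hu huc
    have hswap : Summable (fun q : ℕ × ℕ => (q.1.choose q.2 : ℝ) * p q.1 * u ^ q.2) := by
      rw [summable_prod_of_nonneg (fun q =>
        mul_nonneg (mul_nonneg (Nat.cast_nonneg _) (hp0 q.1)) (pow_nonneg hu _))]
      constructor
      · intro k
        refine summable_of_ne_finset_zero (s := Finset.range (k + 1)) (fun n hn => ?_)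
        rw [Finset.mem_range, not_lt] at hn
        simp [Nat.choose_eq_zero_of_lt (by omega : k < n)]
      · refine ((hspec (1 + u) (habs1u u hu huc)).1).congr fun k => ?_
        have hbin : ∑' n, (k.choose n : ℝ) * p k * u ^ n = p k * (1 + u) ^ k := by
          rw [tsum_eq_sum (s := Finset.range (k + 1)) (fun n hn => by
            rw [Finset.mem_range, not_lt] at hn
            simp [Nat.choose_eq_zero_of_lt (by omega : k < n)])]
          rw [show (1 + u) = u + 1 by ring, add_pow]
          rw [Finset.mul_sum]
          exact Finset.sum_congr rfl fun n _ => by ring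
        simpa using hbin.symm
    have := hswap.prod_symm
    exact this.congr fun q => by simp [Prod.swap]
  have hfibk : ∀ u : ℝ, ∀ n : ℕ, Summable fun k => (k.choose n : ℝ) * p k * u ^ n :=
    fun u n => (hAk n).mul_right _
  -- exchange of summation
  have hswapsum : ∀ u : ℝ, 0 ≤ u → u ≤ c →
      ∑' k, p k * (1 + u) ^ k = ∑' n, A n * u ^ n := by
    intro u hu huc
    have hfibn : ∀ k : ℕ, Summable fun n => (k.choose n : ℝ) * p k * u ^ n := by
      intro k
      refine summable_of_ne_finset_zero (s := Finset.range (k + 1)) (fun n hn => ?_)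
      rw [Finset.mem_range, not_lt] at hn
      simp [Nat.choose_eq_zero_of_lt (by omega : k < n)]
    have hcomm := Summable.tsum_comm' (f := fun n k => (k.choose n : ℝ) * p k * u ^ n)
      (hF u hu huc) (fun n => hfibk u n) hfibn
    -- hcomm : ∑' k, ∑' n, f n k = ∑' n, ∑' k, f n k
    have hl : ∑' (k : ℕ) (n : ℕ), (k.choose n : ℝ) * p k * u ^ n
        = ∑' k, p k * (1 + u) ^ k := by
      refine tsum_congr fun k => ?_
      rw [tsum_eq_sum (s := Finset.range (k + 1)) (fun n hn => by
        rw [Finset.mem_range, not_lt] at hn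
        simp [Nat.choose_eq_zero_of_lt (by omega : k < n)])]
      rw [show (1 + u) = u + 1 by ring, add_pow, Finset.mul_sum]
      exact Finset.sum_congr rfl fun n _ => by ring
    have hr' : ∑' (n : ℕ) (k : ℕ), (k.choose n : ℝ) * p k * u ^ n
        = ∑' n, A n * u ^ n := by
      refine tsum_congr fun n => ?_
      rw [hAdef, ← tsum_mul_right]
    rw [← hl, hcomm, hr']
  -- summability of the coefficient series at c
  have hSA : Summable fun n => A n * c ^ n := by
    have := ((summable_prod_of_nonneg (fun q : ℕ × ℕ =>
        mul_nonneg (mul_nonneg (Nat.cast_nonneg _) (hp0 q.2)) (pow_nonneg hc.le _))).mp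
        (hF c hc.le le_rfl)).2
    refine this.congr fun n => ?_
    rw [hAdef, ← tsum_mul_right]
  have hSB : Summable fun j => B j * c ^ j := by
    refine ((hspec (1 + c) (habs1u c hc.le le_rfl)).2.1).congr fun j => (hBg c j)
  have hA0 : ∀ n, 0 ≤ A n := fun n => tsum_nonneg fun k =>
    mul_nonneg (Nat.cast_nonneg _) (hp0 k)
  have hB0 : ∀ j, 0 ≤ B j := by
    intro j
    have h1 : 0 < ∏ i, risingFact (a i) j := Finset.prod_pos fun i _ => risingFact_pos (ha i) j
    have h2 : 0 < ∏ l, risingFact (b l) j := Finset.prod_pos fun l _ => risingFact_pos (hb l) j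
    rw [hBdef]
    positivity
  -- equality of the two series on (0, c)
  have heq : ∀ u : ℝ, 0 < u → u < c → ∑' n, (A n - B n) * u ^ n = 0 := by
    intro u hu huc
    have hAu : Summable fun n => A n * u ^ n := by
      refine hSA.of_nonneg_of_le (fun n => mul_nonneg (hA0 n) (by positivity)) (fun n => ?_)
      exact mul_le_mul_of_nonneg_left (pow_le_pow_left₀ hu.le huc.le n) (hA0 n)
    have hBu : Summable fun n => B n * u ^ n := by
      refine hSB.of_nonneg_of_le (fun n => mul_nonneg (hB0 n) (by positivity)) (fun n => ?_)
      exact mul_le_mul_of_nonneg_left (pow_le_pow_left₀ hu.le huc.le n) (hB0 n)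
    have e1 : ∑' n, A n * u ^ n = ∑' j, B j * u ^ j := by
      rw [← hswapsum u hu.le huc.le]
      rw [(hspec (1 + u) (habs1u u hu.le huc.le)).2.2]
      exact tsum_congr fun j => hBg u j
    have := Summable.tsum_sub hAu hBu
    rw [e1, sub_self] at this
    rw [← this]
    exact tsum_congr fun n => by ring
  have hDsum : Summable fun n => |A n - B n| * c ^ n := by
    refine (hSA.add hSB).of_nonneg_of_le (fun n => by positivity) (fun n => ?_)
    have : |A n - B n| ≤ A n + B n := by
      have := abs_sub (A n) (B n)
      calc |A n - B n| ≤ |A n| + |B n| := abs_sub _ _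
        _ = A n + B n := by rw [abs_of_nonneg (hA0 n), abs_of_nonneg (hB0 n)]
    calc |A n - B n| * c ^ n ≤ (A n + B n) * c ^ n :=
          mul_le_mul_of_nonneg_right this (by positivity)
      _ = A n * c ^ n + B n * c ^ n := by ring
  have hAB : ∀ n, A n = B n := by
    intro n
    have := coeff_zero (fun n => A n - B n) c hc hDsum heq n
    linarith [this]
  -- identify the mean
  have hmean : m = θ * (∏ i, a i) / (∏ l, b l) := by
    have h1 : A 1 = B 1 := hAB 1
    rw [hAdef] at h1
    simp only [Nat.choose_one_right] at h1
    rw [hBdef] at h1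
    simp only [risingFact_one, pow_one, Nat.factorial_one, Nat.cast_one, div_one] at h1
    rw [hm, h1]
    ring
  -- identify the factorial moment
  have hfm : (∑' k, (k.descFactorial r : ℝ) * p k)
      = (r.factorial : ℝ) * A r := by
    rw [hAdef, ← tsum_mul_left]
    refine tsum_congr fun k => ?_
    rw [Nat.descFactorial_eq_factorial_mul_choose]
    push_cast
    ring
  rw [hfm, hAB r, hBdef]
  -- final algebra
  have hfac : (r.factorial : ℝ) ≠ 0 := by positivity
  have hpa : (0:ℝ) < ∏ i, a i := Finset.prod_pos fun i _ => ha i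
  have hpb : (0:ℝ) < ∏ l, b l := Finset.prod_pos fun l _ => hb l
  have hra : (0:ℝ) < ∏ i, risingFact (a i) r := Finset.prod_pos fun i _ => risingFact_pos (ha i) r
  have hrb : (0:ℝ) < ∏ l, risingFact (b l) r := Finset.prod_pos fun l _ => risingFact_pos (hb l) r
  rw [hmean, Finset.prod_div_distrib, Finset.prod_div_distrib, Finset.prod_pow,
    Finset.prod_pow]
  field_simp
  rw [div_pow, div_mul_cancel₀ _ (pow_ne_zero _ hpb.ne'), mul_pow]
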